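/- Let d₁(x,y) = |x₁ − y₁| + arctan(|x₂ − y₂|) and d₂(x,y) = |x₂ − y₂| + arctan(|x₁ − y₁|) on ℝ², and set d = d₁ + d₂. Then (ℝ², d) does not satisfy the Gromov four-point condition for any constant: for every δ ≥ 0 there exist points x, y, z, v ∈ ℝ² with d(x,y) + d(z,v) > max(d(x,z) + d(y,v), d(x,v) + d(y,z)) + 2δ. Thus the sum of two Gromov hyperbolic metrics need not be Gromov hyperbolic. -/

import Mathlib

noncomputable def dOne (x y : ℝ × ℝ) : ℝ :=
  |x.1 - y.1| + Real.arctan |x.2 - y.2|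

noncomputable def dTwo (x y : ℝ × ℝ) : ℝ :=
  |x.2 - y.2| + Real.arctan |x.1 - y.1|

noncomputable def dSum (x y : ℝ × ℝ) : ℝ :=
  dOne x y + dTwo x y

theorem stmt19 :
    ∀ δ : ℝ, 0 ≤ δ → ∃ x y z v : ℝ × ℝ,
      dSum x y + dSum z v >
        max (dSum x z + dSum y v) (dSum x v + dSum y z) + 2 * δ := by
  intro δ hδ
  set R : ℝ := δ + 1 with hR
  have hRpos : 0 < R := by positivity
  refine ⟨(0, 0), (R, R), (R, 0), (0, R), ?_⟩
  have h1 : |(0 : ℝ) - R| = R := by rw [zero_sub, abs_neg, abs_of_pos hRpos]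
  have h2 : |R - (0 : ℝ)| = R := by rw [sub_zero, abs_of_pos hRpos]
  have harc : 0 < Real.arctan (1 + δ) := by
    have := Real.arctan_strictMono (show (0:ℝ) < 1 + δ by linarith)
    simpa using this
  simp only [dSum, dOne, dTwo, h1, h2, sub_self, abs_zero, Real.arctan_zero]
  ring_nf; rw [max_self]
  nlinarith [harc, hRpos, Real.arctan_pos.mpr hRpos]
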